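/- Functional equation for the Watson series: Let q be a complex number with |q| < 1 and let a be a complex number with a q^j ≠ 1 for every integer j ≥ 0. Define f(a) = ∑_{k=0}^∞ (−1)^k (1 − a q^{2k}) a^{2k} q^{k(5k−1)/2} / ((q;q)_k · (a q^k;q)_∞), which converges absolutely. Then f(a) = f(aq) + a q · f(a q²). -/

import Mathlib

/-- The finite q-Pochhammer symbol `(a; q)_k = ∏_{i=0}^{k-1} (1 - a q^i)`. -/
noncomputable def qPoch (q a : ℂ) (k : ℕ) : ℂ := ∏ i ∈ Finset.range k, (1 - a * q ^ i)

/-- The infinite q-Pochhammer symbol `(a; q)_∞ = ∏_{i=0}^{∞} (1 - a q^i)`. -/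
noncomputable def qPochInf (q a : ℂ) : ℂ := ∏' i : ℕ, (1 - a * q ^ i)

/-- The summand `F_k(a)` of the Watson series. -/
noncomputable def F (q a : ℂ) (k : ℕ) : ℂ :=
  (-1) ^ k * (1 - a * q ^ (2 * k)) * a ^ (2 * k) * q ^ (k * (5 * k - 1) / 2) /
    (qPoch q q k * qPochInf q (a * q ^ k))

/-- The Watson series `f(a)`. -/
noncomputable def watsonF (q a : ℂ) : ℂ := ∑' k : ℕ, F q a k

/-- The telescoping auxiliary term. -/
noncomputable def sAux (q a : ℂ) (k : ℕ) : ℂ :=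
  (-1) ^ k * a ^ (2 * k) * q ^ (k * (5 * k - 1) / 2) * (1 - q ^ k) * (1 + q ^ k - a * q ^ (2 * k)) /
    (qPoch q q k * qPochInf q (a * q ^ k))

namespace WatsonAux

lemma e_succ (k : ℕ) : (k + 1) * (5 * (k + 1) - 1) / 2 = k * (5 * k - 1) / 2 + (5 * k + 2) := by
  match k with
  | 0 => norm_num
  | (j + 1) =>
    rw [show 5 * (j + 1 + 1) - 1 = 5 * j + 9 by omega, show 5 * (j + 1) - 1 = 5 * j + 4 by omega]
    rcases Nat.even_or_odd j with ⟨t, ht⟩ | ⟨t, ht⟩ <;> subst ht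
    · rw [show (t + t + 1 + 1) * (5 * (t + t) + 9) = 2 * ((t + 1) * (10 * t + 9)) by ring,
        show (t + t + 1) * (5 * (t + t) + 4) = 2 * ((t + t + 1) * (5 * t + 2)) by ring,
        Nat.mul_div_cancel_left _ (by norm_num), Nat.mul_div_cancel_left _ (by norm_num)]
      ring
    · rw [show (2 * t + 1 + 1 + 1) * (5 * (2 * t + 1) + 9) = 2 * ((2 * t + 3) * (5 * t + 7)) by ring,
        show (2 * t + 1 + 1) * (5 * (2 * t + 1) + 4) = 2 * ((t + 1) * (10 * t + 9)) by ring,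
        Nat.mul_div_cancel_left _ (by norm_num), Nat.mul_div_cancel_left _ (by norm_num)]
      ring

lemma e_ge (k : ℕ) : 2 * k * k ≤ k * (5 * k - 1) / 2 := by
  rw [Nat.le_div_iff_mul_le (by norm_num)]
  match k with
  | 0 => simp
  | (j + 1) =>
    rw [show 5 * (j + 1) - 1 = 5 * j + 4 by omega]
    nlinarith

lemma one_sub_ne {z : ℂ} (hz : ‖z‖ < 1) : 1 - z ≠ 0 := by
  intro h
  have : z = 1 := by linear_combination -h
  rw [this] at hz; norm_num at hz

lemma exp_one_sub_bound {r t : ℝ} (hr : r < 1) (h0 : 0 ≤ t) (h1 : t ≤ r) :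
    Real.exp (-(1 - r)⁻¹ * t) ≤ 1 - t := by
  set l : ℝ := (1 - r)⁻¹ with hl
  have h1r : 0 < 1 - r := by linarith
  have hl1 : l * (1 - r) = 1 := inv_mul_cancel₀ (ne_of_gt h1r)
  have hl0 : 0 < l := inv_pos.2 h1r
  have key : 1 + l * t ≤ Real.exp (l * t) := by linarith [Real.add_one_le_exp (l * t)]
  have hpos : 0 < 1 + l * t := by positivity
  have h5 : 1 ≤ l * (1 - t) := by
    rw [← hl1]
    exact mul_le_mul_of_nonneg_left (by linarith) hl0.le
  have h4 : (1 + l * t)⁻¹ ≤ 1 - t := by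
    rw [← one_div, div_le_iff₀ hpos]
    nlinarith [mul_nonneg h0 (by linarith : 0 ≤ l * (1 - t) - 1)]
  calc Real.exp (-l * t) = (Real.exp (l * t))⁻¹ := by
        rw [show -l * t = -(l * t) by ring, Real.exp_neg]
    _ ≤ (1 + l * t)⁻¹ := inv_anti₀ hpos key
    _ ≤ 1 - t := h4

variable {q : ℂ} (hq : ‖q‖ < 1)

include hq in
lemma qPoch_ne_zero (k : ℕ) : qPoch q q k ≠ 0 := by
  rw [qPoch, Finset.prod_ne_zero_iff]
  intro i _
  apply one_sub_ne
  rw [norm_mul, norm_pow]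
  calc ‖q‖ * ‖q‖ ^ i ≤ ‖q‖ * 1 :=
        mul_le_mul_of_nonneg_left (pow_le_one₀ (norm_nonneg q) hq.le) (norm_nonneg q)
    _ < 1 := by rwa [mul_one]

include hq in
lemma geom_sum_le (k : ℕ) : ∑ i ∈ Finset.range k, ‖q‖ ^ i ≤ (1 - ‖q‖)⁻¹ := by
  have hs : Summable (fun i : ℕ => ‖q‖ ^ i) := summable_geometric_of_lt_one (norm_nonneg q) hq
  calc ∑ i ∈ Finset.range k, ‖q‖ ^ i ≤ ∑' i : ℕ, ‖q‖ ^ i :=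
        hs.sum_le_tsum _ (fun i _ => by positivity)
    _ = (1 - ‖q‖)⁻¹ := tsum_geometric_of_lt_one (norm_nonneg q) hq

include hq in
lemma qPoch_norm_ge (k : ℕ) :
    Real.exp (-(1 - ‖q‖)⁻¹ * (‖q‖ * (1 - ‖q‖)⁻¹)) ≤ ‖qPoch q q k‖ := by
  have h0q : (0 : ℝ) ≤ ‖q‖ := norm_nonneg q
  rw [qPoch, norm_prod]
  have step1 : ∀ i ∈ Finset.range k,
      Real.exp (-(1 - ‖q‖)⁻¹ * (‖q‖ * ‖q‖ ^ i)) ≤ ‖1 - q * q ^ i‖ := by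
    intro i _
    have hle : ‖q‖ * ‖q‖ ^ i ≤ ‖q‖ :=
      mul_le_of_le_one_right h0q (pow_le_one₀ h0q hq.le) |>.trans_eq rfl
    calc Real.exp (-(1 - ‖q‖)⁻¹ * (‖q‖ * ‖q‖ ^ i)) ≤ 1 - ‖q‖ * ‖q‖ ^ i :=
          exp_one_sub_bound hq (by positivity) hle
      _ ≤ ‖1 - q * q ^ i‖ := by
          have := norm_sub_norm_le (1 : ℂ) (q * q ^ i)
          rw [norm_one, norm_mul, norm_pow] at this
          linarith
  calc Real.exp (-(1 - ‖q‖)⁻¹ * (‖q‖ * (1 - ‖q‖)⁻¹))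
      ≤ Real.exp (∑ i ∈ Finset.range k, -(1 - ‖q‖)⁻¹ * (‖q‖ * ‖q‖ ^ i)) := by
        apply Real.exp_le_exp.2
        have : ∑ i ∈ Finset.range k, -(1 - ‖q‖)⁻¹ * (‖q‖ * ‖q‖ ^ i)
            = -(1 - ‖q‖)⁻¹ * (‖q‖ * ∑ i ∈ Finset.range k, ‖q‖ ^ i) := by
          rw [Finset.mul_sum, Finset.mul_sum]
        rw [this]
        have h1r : (0 : ℝ) ≤ (1 - ‖q‖)⁻¹ := by
          have : (0:ℝ) < 1 - ‖q‖ := by linarith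
          positivity
        nlinarith [geom_sum_le hq k, mul_le_mul_of_nonneg_left (geom_sum_le hq k) h0q]
    _ = ∏ i ∈ Finset.range k, Real.exp (-(1 - ‖q‖)⁻¹ * (‖q‖ * ‖q‖ ^ i)) := by
        rw [Real.exp_sum]
    _ ≤ ∏ i ∈ Finset.range k, ‖1 - q * q ^ i‖ :=
        Finset.prod_le_prod (fun i _ => (Real.exp_pos _).le) step1


include hq in
lemma eventually_small (x : ℂ) : ∃ N : ℕ, ∀ n ≥ N, ‖x‖ * ‖q‖ ^ n ≤ 1 / 2 := by
  have h0 : Filter.Tendsto (fun n : ℕ => ‖x‖ * ‖q‖ ^ n) Filter.atTop (nhds (‖x‖ * 0)) :=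
    (tendsto_pow_atTop_nhds_zero_of_lt_one (norm_nonneg q) hq).const_mul ‖x‖
  rw [mul_zero] at h0
  have h1 : ∀ᶠ n in Filter.atTop, ‖x‖ * ‖q‖ ^ n < 1 / 2 :=
    h0.eventually_lt_const (by norm_num)
  obtain ⟨N, hN⟩ := Filter.eventually_atTop.1 h1
  exact ⟨N, fun n hn => (hN n hn).le⟩

include hq in
lemma norm_log_le (x : ℂ) (hsm : ‖x‖ ≤ 1 / 2) (n : ℕ) :
    ‖Complex.log (1 - x * q ^ n)‖ ≤ 3 / 2 * ‖x‖ * ‖q‖ ^ n := by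
  have hzn : ‖-(x * q ^ n)‖ ≤ 1 / 2 := by
    rw [norm_neg, norm_mul, norm_pow]
    calc ‖x‖ * ‖q‖ ^ n ≤ ‖x‖ * 1 :=
          mul_le_mul_of_nonneg_left (pow_le_one₀ (norm_nonneg q) hq.le) (norm_nonneg x)
      _ ≤ 1 / 2 := by rwa [mul_one]
  have h := Complex.norm_log_one_add_half_le_self hzn
  rw [show (1 : ℂ) + -(x * q ^ n) = 1 - x * q ^ n by ring] at h
  rw [norm_neg, norm_mul, norm_pow] at h
  calc ‖Complex.log (1 - x * q ^ n)‖ ≤ 3 / 2 * (‖x‖ * ‖q‖ ^ n) := h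
    _ = 3 / 2 * ‖x‖ * ‖q‖ ^ n := by ring

include hq in
lemma summable_log_norm (x : ℂ) (hsm : ‖x‖ ≤ 1 / 2) :
    Summable (fun n : ℕ => ‖Complex.log (1 - x * q ^ n)‖) := by
  apply Summable.of_nonneg_of_le (fun n => norm_nonneg _) (norm_log_le hq x hsm)
  exact (summable_geometric_of_lt_one (norm_nonneg q) hq).mul_left _

include hq in
lemma summable_log (x : ℂ) : Summable (fun n : ℕ => Complex.log (1 - x * q ^ n)) := by
  obtain ⟨N, hN⟩ := eventually_small hq x
  rw [← summable_nat_add_iff N]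
  have heq : ∀ n : ℕ, Complex.log (1 - x * q ^ (n + N))
      = Complex.log (1 - x * q ^ N * q ^ n) := by
    intro n
    rw [mul_assoc, ← pow_add, Nat.add_comm N n]
  apply Summable.congr _ (fun n => (heq n).symm)
  apply Summable.of_norm
  apply summable_log_norm hq (x * q ^ N)
  rw [norm_mul, norm_pow]
  exact hN N le_rfl

include hq in
lemma multipliable_qPochInf (x : ℂ) (hx : ∀ n : ℕ, x * q ^ n ≠ 1) :
    Multipliable (fun n : ℕ => 1 - x * q ^ n) := by
  exact Complex.multipliable_of_summable_log (summable_log hq x)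

include hq in
lemma qPochInf_eq_exp (x : ℂ) (hx : ∀ n : ℕ, x * q ^ n ≠ 1) :
    qPochInf q x = Complex.exp (∑' n : ℕ, Complex.log (1 - x * q ^ n)) := by
  have h := Complex.cexp_tsum_eq_tprod (f := fun n => 1 - x * q ^ n)
    (fun n => sub_ne_zero.2 fun h => hx n h.symm) (summable_log hq x)
  exact h.symm

include hq in
lemma qPochInf_ne_zero (x : ℂ) (hx : ∀ n : ℕ, x * q ^ n ≠ 1) : qPochInf q x ≠ 0 := by
  rw [qPochInf_eq_exp hq x hx]; exact Complex.exp_ne_zero _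

include hq in
lemma qPochInf_shift (x : ℂ) (hx : ∀ n : ℕ, x * q ^ n ≠ 1) :
    qPochInf q x = (1 - x) * qPochInf q (x * q) := by
  have hx' : ∀ n : ℕ, (x * q) * q ^ n ≠ 1 := fun n => by
    rw [mul_assoc, ← pow_succ']; exact hx (n + 1)
  have hm : Multipliable (fun n : ℕ => 1 - x * q ^ (n + 1)) := by
    apply (multipliable_qPochInf hq (x * q) hx').congr
    intro b
    rw [pow_succ']
    ring_nf
  have h := tprod_eq_zero_mul' (f := fun n : ℕ => 1 - x * q ^ n) hm
  unfold qPochInf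
  rw [h]
  congr 1
  · simp
  · apply tprod_congr
    intro b
    show 1 - x * q ^ (b + 1) = 1 - x * q * q ^ b
    rw [pow_succ']
    ring_nf

include hq in
lemma qPochInf_norm_ge (x : ℂ) (hx : ∀ n : ℕ, x * q ^ n ≠ 1) (hsm : ‖x‖ ≤ 1 / 2) :
    Real.exp (-(3 / 4 * (1 - ‖q‖)⁻¹)) ≤ ‖qPochInf q x‖ := by
  have hnorm : ‖qPochInf q x‖
      = Real.exp ((∑' n : ℕ, Complex.log (1 - x * q ^ n)).re) := by
    rw [qPochInf_eq_exp hq x hx, Complex.norm_exp]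
  rw [hnorm]
  apply Real.exp_le_exp.2
  set L := ∑' n : ℕ, Complex.log (1 - x * q ^ n) with hL
  have h1 : ‖L‖ ≤ 3 / 4 * (1 - ‖q‖)⁻¹ := by
    calc ‖L‖ ≤ ∑' n : ℕ, ‖Complex.log (1 - x * q ^ n)‖ :=
          norm_tsum_le_tsum_norm (summable_log_norm hq x hsm)
      _ ≤ ∑' n : ℕ, 3 / 2 * ‖x‖ * ‖q‖ ^ n := by
          apply Summable.tsum_le_tsum (norm_log_le hq x hsm) (summable_log_norm hq x hsm)
          exact (summable_geometric_of_lt_one (norm_nonneg q) hq).mul_left _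
      _ = 3 / 2 * ‖x‖ * (1 - ‖q‖)⁻¹ := by
          rw [tsum_mul_left, tsum_geometric_of_lt_one (norm_nonneg q) hq]
      _ ≤ 3 / 4 * (1 - ‖q‖)⁻¹ := by
          have h1r : (0:ℝ) < (1 - ‖q‖)⁻¹ := inv_pos.2 (by linarith)
          nlinarith
  have h2 : -‖L‖ ≤ L.re := by
    have := Complex.abs_re_le_norm L
    cases abs_le.1 this with
    | intro h _ => linarith
  linarith


include hq in
lemma summable_G (b : ℂ) (hb : ∀ n : ℕ, b * q ^ n ≠ 1) :
    Summable (fun k : ℕ =>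
      ‖b‖ ^ (2 * k) * ‖q‖ ^ (k * (5 * k - 1) / 2) /
        (‖qPoch q q k‖ * ‖qPochInf q (b * q ^ k)‖)) := by
  obtain ⟨N, hN⟩ := eventually_small hq b
  set c1 := Real.exp (-(1 - ‖q‖)⁻¹ * (‖q‖ * (1 - ‖q‖)⁻¹)) with hc1def
  set c2 := Real.exp (-(3 / 4 * (1 - ‖q‖)⁻¹)) with hc2def
  have hc1 : 0 < c1 := Real.exp_pos _
  have hc2 : 0 < c2 := Real.exp_pos _
  apply summable_of_isBigO_nat
    (summable_geometric_of_lt_one (by norm_num : (0:ℝ) ≤ 1/2) (by norm_num))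
  rw [Asymptotics.isBigO_iff]
  refine ⟨(c1 * c2)⁻¹, Filter.eventually_atTop.2 ⟨N, fun k hk => ?_⟩⟩
  have hsmk : ‖b * q ^ k‖ ≤ 1 / 2 := by rw [norm_mul, norm_pow]; exact hN k hk
  have hxk : ∀ n : ℕ, (b * q ^ k) * q ^ n ≠ 1 := fun n => by
    rw [mul_assoc, ← pow_add]; exact hb (k + n)
  have hd1 : c1 ≤ ‖qPoch q q k‖ := qPoch_norm_ge hq k
  have hd2 : c2 ≤ ‖qPochInf q (b * q ^ k)‖ := qPochInf_norm_ge hq _ hxk hsmk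
  have hnum : ‖b‖ ^ (2 * k) * ‖q‖ ^ (k * (5 * k - 1) / 2) ≤ (1/2 : ℝ) ^ k := by
    calc ‖b‖ ^ (2 * k) * ‖q‖ ^ (k * (5 * k - 1) / 2)
        ≤ ‖b‖ ^ (2 * k) * ‖q‖ ^ (2 * k * k) :=
          mul_le_mul_of_nonneg_left
            (pow_le_pow_of_le_one (norm_nonneg q) hq.le (e_ge k)) (by positivity)
      _ = (‖b‖ * ‖q‖ ^ k) ^ (2 * k) := by
          rw [mul_pow, ← pow_mul, show k * (2 * k) = 2 * k * k from by ring]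
      _ ≤ (1/2 : ℝ) ^ (2 * k) := by
          apply pow_le_pow_left₀ (by positivity) (by rw [norm_mul, norm_pow] at hsmk; exact hsmk)
      _ ≤ (1/2 : ℝ) ^ k := pow_le_pow_of_le_one (by norm_num) (by norm_num) (by omega)
  rw [Real.norm_of_nonneg (by positivity), Real.norm_of_nonneg (by positivity)]
  calc ‖b‖ ^ (2 * k) * ‖q‖ ^ (k * (5 * k - 1) / 2) /
        (‖qPoch q q k‖ * ‖qPochInf q (b * q ^ k)‖)
      ≤ (1/2 : ℝ) ^ k / (c1 * c2) := by
        apply div_le_div₀ (by positivity) hnum (by positivity)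
        exact mul_le_mul hd1 hd2 hc2.le (norm_nonneg _)
    _ = (c1 * c2)⁻¹ * (1/2 : ℝ) ^ k := by ring

include hq in
lemma summable_norm_F (b : ℂ) (hb : ∀ n : ℕ, b * q ^ n ≠ 1) :
    Summable (fun k : ℕ => ‖F q b k‖) := by
  apply Summable.of_nonneg_of_le (fun k => norm_nonneg _) (fun k => ?_)
    (((summable_G hq b hb).mul_left (1 + ‖b‖)))
  rw [F, norm_div, norm_mul (qPoch q q k), ← mul_div_assoc]
  have h1b : ‖(1:ℂ) - b * q ^ (2 * k)‖ ≤ 1 + ‖b‖ := by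
    calc ‖(1:ℂ) - b * q ^ (2 * k)‖ ≤ ‖(1:ℂ)‖ + ‖b * q ^ (2 * k)‖ := norm_sub_le _ _
      _ ≤ 1 + ‖b‖ := by
          rw [norm_one, norm_mul, norm_pow]
          have : ‖b‖ * ‖q‖ ^ (2 * k) ≤ ‖b‖ * 1 :=
            mul_le_mul_of_nonneg_left (pow_le_one₀ (norm_nonneg q) hq.le) (norm_nonneg b)
          linarith
  have hnum : ‖(-1:ℂ) ^ k * (1 - b * q ^ (2 * k)) * b ^ (2 * k) * q ^ (k * (5 * k - 1) / 2)‖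
      ≤ (1 + ‖b‖) * (‖b‖ ^ (2 * k) * ‖q‖ ^ (k * (5 * k - 1) / 2)) := by
    calc ‖(-1:ℂ) ^ k * (1 - b * q ^ (2 * k)) * b ^ (2 * k) * q ^ (k * (5 * k - 1) / 2)‖
        = ‖(1:ℂ) - b * q ^ (2 * k)‖ * (‖b‖ ^ (2 * k) * ‖q‖ ^ (k * (5 * k - 1) / 2)) := by
          simp [norm_mul, norm_pow, mul_assoc]
      _ ≤ (1 + ‖b‖) * (‖b‖ ^ (2 * k) * ‖q‖ ^ (k * (5 * k - 1) / 2)) :=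
          mul_le_mul_of_nonneg_right h1b (by positivity)
  exact div_le_div_of_nonneg_right hnum (by positivity) |>.trans_eq rfl

include hq in
lemma summable_norm_sAux (b : ℂ) (hb : ∀ n : ℕ, b * q ^ n ≠ 1) :
    Summable (fun k : ℕ => ‖sAux q b k‖) := by
  apply Summable.of_nonneg_of_le (fun k => norm_nonneg _) (fun k => ?_)
    (((summable_G hq b hb).mul_left (2 * (2 + ‖b‖))))
  rw [sAux, norm_div, norm_mul (qPoch q q k), ← mul_div_assoc]
  have hqk1 : ∀ m : ℕ, ‖q‖ ^ m ≤ 1 := fun m => pow_le_one₀ (norm_nonneg q) hq.le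
  have h2 : ‖(1:ℂ) - q ^ k‖ ≤ 2 := by
    calc ‖(1:ℂ) - q ^ k‖ ≤ ‖(1:ℂ)‖ + ‖q ^ k‖ := norm_sub_le _ _
      _ ≤ 2 := by rw [norm_one, norm_pow]; linarith [hqk1 k]
  have h3 : ‖(1:ℂ) + q ^ k - b * q ^ (2 * k)‖ ≤ 2 + ‖b‖ := by
    calc ‖(1:ℂ) + q ^ k - b * q ^ (2 * k)‖
        ≤ ‖(1:ℂ) + q ^ k‖ + ‖b * q ^ (2 * k)‖ := norm_sub_le _ _
      _ ≤ 2 + ‖b‖ := by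
          have h4 : ‖(1:ℂ) + q ^ k‖ ≤ 2 := by
            calc ‖(1:ℂ) + q ^ k‖ ≤ ‖(1:ℂ)‖ + ‖q ^ k‖ := norm_add_le _ _
              _ ≤ 2 := by rw [norm_one, norm_pow]; linarith [hqk1 k]
          rw [norm_mul, norm_pow]
          have : ‖b‖ * ‖q‖ ^ (2 * k) ≤ ‖b‖ * 1 :=
            mul_le_mul_of_nonneg_left (hqk1 _) (norm_nonneg b)
          linarith
  have hnum : ‖(-1:ℂ) ^ k * b ^ (2 * k) * q ^ (k * (5 * k - 1) / 2) * (1 - q ^ k) *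
        (1 + q ^ k - b * q ^ (2 * k))‖
      ≤ (2 * (2 + ‖b‖)) * (‖b‖ ^ (2 * k) * ‖q‖ ^ (k * (5 * k - 1) / 2)) := by
    set X := ‖b‖ ^ (2 * k) * ‖q‖ ^ (k * (5 * k - 1) / 2) with hX
    have hX0 : 0 ≤ X := by positivity
    calc ‖(-1:ℂ) ^ k * b ^ (2 * k) * q ^ (k * (5 * k - 1) / 2) * (1 - q ^ k) *
          (1 + q ^ k - b * q ^ (2 * k))‖
        = (X * ‖(1:ℂ) - q ^ k‖) * ‖(1:ℂ) + q ^ k - b * q ^ (2 * k)‖ := by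
          simp [norm_mul, norm_pow, mul_assoc, hX]
      _ ≤ (X * 2) * (2 + ‖b‖) := by
          apply mul_le_mul (mul_le_mul_of_nonneg_left h2 hX0) h3 (norm_nonneg _) (by positivity)
      _ = (2 * (2 + ‖b‖)) * X := by ring
  exact div_le_div_of_nonneg_right hnum (by positivity) |>.trans_eq rfl


set_option maxHeartbeats 1000000 in
include hq in
lemma key_identity (a : ℂ) (ha : ∀ j : ℕ, a * q ^ j ≠ 1) (k : ℕ) :
    F q a k - (F q (a * q) k + a * q * F q (a * q ^ 2) k) = sAux q a k - sAux q a (k + 1) := by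
  have hx0 : ∀ n : ℕ, (a * q ^ k) * q ^ n ≠ 1 := fun n => by
    rw [mul_assoc, ← pow_add]; exact ha (k + n)
  have hx1 : ∀ n : ℕ, (a * q ^ (k + 1)) * q ^ n ≠ 1 := fun n => by
    rw [mul_assoc, ← pow_add]; exact ha (k + 1 + n)
  have hx2 : ∀ n : ℕ, (a * q ^ (k + 2)) * q ^ n ≠ 1 := fun n => by
    rw [mul_assoc, ← pow_add]; exact ha (k + 2 + n)
  have hP : qPoch q q k ≠ 0 := qPoch_ne_zero hq k
  have hQk : (1 : ℂ) - q * q ^ k ≠ 0 := by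
    apply one_sub_ne
    rw [norm_mul, norm_pow]
    calc ‖q‖ * ‖q‖ ^ k ≤ ‖q‖ * 1 :=
          mul_le_mul_of_nonneg_left (pow_le_one₀ (norm_nonneg q) hq.le) (norm_nonneg q)
      _ < 1 := by rwa [mul_one]
  have hA0 : (1 : ℂ) - a * q ^ k ≠ 0 := sub_ne_zero.2 fun h => (ha k) h.symm
  have hA1 : (1 : ℂ) - a * q ^ (k + 1) ≠ 0 := sub_ne_zero.2 fun h => (ha (k + 1)) h.symm
  have hPi2 : qPochInf q (a * q ^ (k + 2)) ≠ 0 := qPochInf_ne_zero hq _ hx2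
  have r1' : qPochInf q (a * q ^ (k + 1))
      = (1 - a * q ^ (k + 1)) * qPochInf q (a * q ^ (k + 2)) := by
    rw [qPochInf_shift hq _ hx1, show a * q ^ (k + 1) * q = a * q ^ (k + 2) from by ring]
  have r0 : qPochInf q (a * q ^ k)
      = (1 - a * q ^ k) * ((1 - a * q ^ (k + 1)) * qPochInf q (a * q ^ (k + 2))) := by
    rw [qPochInf_shift hq _ hx0, show a * q ^ k * q = a * q ^ (k + 1) from by ring, r1']
  have r1 : qPochInf q (a * q * q ^ k)
      = (1 - a * q ^ (k + 1)) * qPochInf q (a * q ^ (k + 2)) := by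
    rw [show a * q * q ^ k = a * q ^ (k + 1) from by ring, r1']
  have r2 : qPochInf q (a * q ^ 2 * q ^ k) = qPochInf q (a * q ^ (k + 2)) := by
    rw [show a * q ^ 2 * q ^ k = a * q ^ (k + 2) from by ring]
  have rP : qPoch q q (k + 1) = qPoch q q k * (1 - q * q ^ k) := Finset.prod_range_succ _ _
  unfold F sAux
  rw [r0, r1, r2, r1', rP, e_succ k, pow_add q (k * (5 * k - 1) / 2) (5 * k + 2),
    ← mul_div_assoc]
  have hd1 : qPoch q q k * ((1 - a * q ^ k) * ((1 - a * q ^ (k + 1)) * qPochInf q (a * q ^ (k + 2)))) ≠ 0 :=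
    mul_ne_zero hP (mul_ne_zero hA0 (mul_ne_zero hA1 hPi2))
  have hd2 : qPoch q q k * ((1 - a * q ^ (k + 1)) * qPochInf q (a * q ^ (k + 2))) ≠ 0 :=
    mul_ne_zero hP (mul_ne_zero hA1 hPi2)
  have hd3 : qPoch q q k * qPochInf q (a * q ^ (k + 2)) ≠ 0 := mul_ne_zero hP hPi2
  have hd5 : qPoch q q k * (1 - q * q ^ k) * ((1 - a * q ^ (k + 1)) * qPochInf q (a * q ^ (k + 2))) ≠ 0 :=
    mul_ne_zero (mul_ne_zero hP hQk) (mul_ne_zero hA1 hPi2)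
  rw [div_add_div _ _ hd2 hd3, div_sub_div _ _ hd1 (mul_ne_zero hd2 hd3),
    div_sub_div _ _ hd1 hd5,
    div_eq_div_iff (mul_ne_zero hd1 (mul_ne_zero hd2 hd3)) (mul_ne_zero hd1 hd5)]
  ring

end WatsonAux

/-- Functional equation for the Watson series: `f(a) = f(aq) + aq f(aq²)`. -/
theorem watson_functional_equation (q a : ℂ) (hq : ‖q‖ < 1)
    (ha : ∀ j : ℕ, a * q ^ j ≠ 1) :
    Summable (fun k : ℕ => ‖F q a k‖) ∧
    watsonF q a = watsonF q (a * q) + a * q * watsonF q (a * q ^ 2) := by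
  have haq : ∀ j : ℕ, (a * q) * q ^ j ≠ 1 := fun j => by
    rw [mul_assoc, ← pow_succ']; exact ha (j + 1)
  have haq2 : ∀ j : ℕ, (a * q ^ 2) * q ^ j ≠ 1 := fun j => by
    rw [mul_assoc, ← pow_add]; exact ha (2 + j)
  have SFa := WatsonAux.summable_norm_F hq a ha
  refine ⟨SFa, ?_⟩
  have hFa : Summable (F q a) := SFa.of_norm
  have hFaq : Summable (F q (a * q)) := (WatsonAux.summable_norm_F hq _ haq).of_norm
  have hFaq2 : Summable (F q (a * q ^ 2)) := (WatsonAux.summable_norm_F hq _ haq2).of_norm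
  have hsa : Summable (sAux q a) := (WatsonAux.summable_norm_sAux hq a ha).of_norm
  have hsa1 : Summable (fun k => sAux q a (k + 1)) := (summable_nat_add_iff 1).2 hsa
  have h1 : ∑' k : ℕ, (F q a k - (F q (a * q) k + a * q * F q (a * q ^ 2) k)) = 0 := by
    rw [tsum_congr (fun k => WatsonAux.key_identity hq a ha k), hsa.tsum_sub hsa1]
    have h0 : ∑' k : ℕ, sAux q a (k + 1) = (∑' k : ℕ, sAux q a k) - sAux q a 0 := by
      rw [hsa.tsum_eq_zero_add]; ring
    have hs0 : sAux q a 0 = 0 := by simp [sAux]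
    rw [h0, hs0]; ring
  have h2 : ∑' k : ℕ, (F q a k - (F q (a * q) k + a * q * F q (a * q ^ 2) k))
      = watsonF q a - (watsonF q (a * q) + a * q * watsonF q (a * q ^ 2)) := by
    rw [hFa.tsum_sub (hFaq.add (hFaq2.mul_left _)), hFaq.tsum_add (hFaq2.mul_left _),
      tsum_mul_left]
    rfl
  have h3 : watsonF q a - (watsonF q (a * q) + a * q * watsonF q (a * q ^ 2)) = 0 := by
    rw [← h2]; exact h1
  exact sub_eq_zero.1 h3
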